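/- For all i, j ∈ ZMod n (n ≥ 1) with i ≠ j and all m, m' ∈ ZMod n: h_{i,j}(m,m') + h_{i+1,j+1}(m,m') − h_{i,j+1}(m,m') − h_{i+1,j}(m,m') = 2(δ_{i m} δ_{j m'} + δ_{i m'} δ_{j m}). That is, the overlap function of the conditional mutual information CMI(i,j) on kinematic space equals 2δ^{ij,mm'}: the only pair of intervals which has a net overlap with CMI(i,j) is (Z_i, Z_j). -/
import Mathlib


/-- Membership in the cyclic interval `[a,b)` of `ZMod n`: the set
`{a, a+1, …, b−1}` traversed cyclically, with `[a,a) = ∅`. -/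
abbrev inCyc {n : ℕ} [NeZero n] (a b x : ZMod n) : Prop :=
  (x - a).val < (b - a).val

/-- The overlap number of the two-block coloring of `ZMod n` with blocks `[a,b)` and its
complement: `h_{a,b}(m,m') = 1` if exactly one of `m, m'` lies in `[a,b)`, else `0`. -/
def hTwo {n : ℕ} [NeZero n] (a b m m' : ZMod n) : ℕ :=
  if (inCyc a b m ↔ inCyc a b m') then 0 else 1

set_option maxHeartbeats 2000000 in
/-- Auxiliary: the purely arithmetic core of `cmi_overlap`, stated over `ℕ`. -/
theorem cmi_overlap_key (n d u u' : ℕ) (hn : 2 ≤ n) (hd : 1 ≤ d) (hdn : d < n)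
    (hu : u < n) (hu' : u' < n) :
    ((if ((u < d) ↔ (u' < d)) then (0:ℤ) else 1)
     + (if (((u+(n-1))%n < d) ↔ ((u'+(n-1))%n < d)) then 0 else 1)
     - (if ((u < (d+1)%n) ↔ (u' < (d+1)%n)) then 0 else 1)
     - (if (((u+(n-1))%n < (d+(n-1))%n) ↔ ((u'+(n-1))%n < (d+(n-1))%n)) then 0 else 1))
    = 2 * ((if u = 0 then 1 else 0)*(if u' = d then 1 else 0)
         + (if u' = 0 then 1 else 0)*(if u = d then 1 else 0)) := by
  have pmod : ∀ x : ℕ, x < n → (x + (n-1)) % n = if x = 0 then n - 1 else x - 1 := by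
    intro x hx
    rcases eq_or_ne x 0 with h | h
    · subst h; simp [Nat.mod_eq_of_lt (show 0 + (n-1) < n by omega)]
    · rw [if_neg h, show x + (n-1) = n + (x-1) by omega, Nat.add_mod_left,
        Nat.mod_eq_of_lt (by omega)]
  have smod : (d + 1) % n = if d = n - 1 then 0 else d + 1 := by
    rcases eq_or_ne d (n-1) with h | h
    · subst h; simp [show n - 1 + 1 = n by omega]
    · rw [if_neg h, Nat.mod_eq_of_lt (by omega)]
  rw [pmod u hu, pmod u' hu', pmod d hdn, smod]
  split_ifs <;> omega

/-- The overlap function of the conditional mutual information `CMI(i,j)` on kinematic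
space equals `2 δ^{ij,mm'}`: for `i ≠ j`,
`h_{i,j}(m,m') + h_{i+1,j+1}(m,m') − h_{i,j+1}(m,m') − h_{i+1,j}(m,m')
  = 2 (δ_{im} δ_{jm'} + δ_{im'} δ_{jm})`,
so the only pair of intervals with a net overlap with `CMI(i,j)` is `(Z_i, Z_j)`. -/
theorem cmi_overlap {n : ℕ} [NeZero n] (i j : ZMod n) (hij : i ≠ j) (m m' : ZMod n) :
    (hTwo i j m m' : ℤ) + (hTwo (i + 1) (j + 1) m m' : ℤ)
      - (hTwo i (j + 1) m m' : ℤ) - (hTwo (i + 1) j m m' : ℤ)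
    = 2 * ((if i = m then 1 else 0) * (if j = m' then 1 else 0)
         + (if i = m' then 1 else 0) * (if j = m then 1 else 0)) := by
  have hn : 2 ≤ n := by
    have h1 : n ≠ 1 := by
      rintro rfl
      exact hij (Subsingleton.elim i j)
    have := NeZero.pos n
    omega
  have vsub1 : ∀ x : ZMod n, (x - 1).val = (x.val + (n-1)) % n := by
    intro x
    have hcast : ((n - 1 : ℕ) : ZMod n) = -1 := by
      rw [Nat.cast_sub (by omega), ZMod.natCast_self, Nat.cast_one, zero_sub]
    rw [sub_eq_add_neg, ← hcast, ZMod.val_add, ZMod.val_natCast,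
      Nat.mod_eq_of_lt (show n - 1 < n by omega)]
  have vadd1 : ∀ x : ZMod n, (x + 1).val = (x.val + 1) % n := by
    intro x
    rw [ZMod.val_add, show (1 : ZMod n) = ((1:ℕ) : ZMod n) by simp, ZMod.val_natCast,
      Nat.mod_eq_of_lt (show 1 < n by omega)]
  have dm : (i = m) ↔ ((m - i).val = 0) := by
    rw [ZMod.val_eq_zero, sub_eq_zero, eq_comm]
  have dm' : (i = m') ↔ ((m' - i).val = 0) := by
    rw [ZMod.val_eq_zero, sub_eq_zero, eq_comm]
  have djm' : (j = m') ↔ ((m' - i).val = (j - i).val) := by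
    constructor
    · rintro rfl; rfl
    · intro h
      have := ZMod.val_injective n h
      have h2 : m' = j := by
        have := congrArg (· + i) this
        simpa [sub_add_cancel] using this
      exact h2.symm
  have djm : (j = m) ↔ ((m - i).val = (j - i).val) := by
    constructor
    · rintro rfl; rfl
    · intro h
      have := ZMod.val_injective n h
      have h2 : m = j := by
        have := congrArg (· + i) this
        simpa [sub_add_cancel] using this
      exact h2.symm
  have e1 : m - (i + 1) = (m - i) - 1 := by ring
  have e2 : m' - (i + 1) = (m' - i) - 1 := by ring
  have e3 : j + 1 - (i + 1) = j - i := by ring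
  have e4 : j + 1 - i = (j - i) + 1 := by ring
  have e5 : j - (i + 1) = (j - i) - 1 := by ring
  have hd : 1 ≤ (j - i).val := by
    have hne : j - i ≠ 0 := sub_ne_zero_of_ne (Ne.symm hij)
    rcases Nat.eq_zero_or_pos (j - i).val with h | h
    · exact absurd (ZMod.val_eq_zero _ |>.mp h) hne
    · exact h
  simp only [hTwo, inCyc, e1, e2, e3, e4, e5, vsub1, vadd1, dm, dm', djm, djm']
  push_cast
  exact cmi_overlap_key n (j - i).val (m - i).val (m' - i).val hn hd
    (ZMod.val_lt _) (ZMod.val_lt _) (ZMod.val_lt _)
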